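/- Let Y be a random vector in ℝⁿ such that ‖σ(Y)‖² and ‖σ(−Y)‖² are integrable, where σ(x) = max(x,0) is applied componentwise, and suppose 𝔼|‖σ(Y)‖² − ‖σ(−Y)‖²| ≤ ε. Define S(ω) := sup { ‖σ(Y(ω)) − z‖² : z ∈ ℝⁿ, z ≥ 0 componentwise, ‖z‖ = ‖σ(Y(ω))‖ }. Then 𝔼‖σ(Y) − σ(−Y)‖² ≥ 𝔼[S] − ε. -/

import Mathlib

open MeasureTheory

/-- Componentwise ReLU on `ℝⁿ` (Euclidean space). -/
noncomputable def reluVec {n : ℕ} (y : EuclideanSpace ℝ (Fin n)) : EuclideanSpace ℝ (Fin n) :=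
  WithLp.toLp 2 (fun i => max (y i) 0)

lemma reluVec_nonneg {n : ℕ} (y : EuclideanSpace ℝ (Fin n)) (i : Fin n) : 0 ≤ reluVec y i :=
  le_max_right _ _

lemma inner_nonneg_of_nonneg {n : ℕ} (a b : EuclideanSpace ℝ (Fin n))
    (ha : ∀ i, 0 ≤ a i) (hb : ∀ i, 0 ≤ b i) : (0 : ℝ) ≤ inner ℝ a b := by
  rw [PiLp.inner_apply]
  exact Finset.sum_nonneg fun i _ => by
    simpa [RCLike.inner_apply] using mul_nonneg (hb i) (ha i)

lemma relu_inner_zero {n : ℕ} (y : EuclideanSpace ℝ (Fin n)) :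
    (inner ℝ (reluVec y) (reluVec (-y)) : ℝ) = 0 := by
  rw [PiLp.inner_apply]
  apply Finset.sum_eq_zero
  intro i _
  simp only [reluVec, RCLike.inner_apply, conj_trivial, PiLp.neg_apply, WithLp.ofLp_toLp]
  rcases le_total (y i) 0 with h | h
  · rw [max_eq_right h, mul_zero]
  · rw [max_eq_right (neg_nonpos_of_nonneg h), zero_mul]

/-- Pointwise bound: the sup of squared distances is at most
`‖σ(y) - σ(-y)‖² + |‖σ(y)‖² - ‖σ(-y)‖²|`. -/
lemma pointwise_bound {n : ℕ} (y : EuclideanSpace ℝ (Fin n)) :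
    sSup {d : ℝ | ∃ z : EuclideanSpace ℝ (Fin n),
        (∀ i, 0 ≤ z i) ∧ ‖z‖ = ‖reluVec y‖ ∧ d = ‖reluVec y - z‖ ^ 2}
      ≤ ‖reluVec y - reluVec (-y)‖ ^ 2 + |‖reluVec y‖ ^ 2 - ‖reluVec (-y)‖ ^ 2| := by
  set A := ‖reluVec y‖ ^ 2 with hA
  set B := ‖reluVec (-y)‖ ^ 2 with hB
  have hsplit : ‖reluVec y - reluVec (-y)‖ ^ 2 = A + B := by
    rw [@norm_sub_sq_real, relu_inner_zero]
    ring
  have h2A : 2 * A ≤ ‖reluVec y - reluVec (-y)‖ ^ 2 + |A - B| := by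
    rw [hsplit]
    have := le_abs_self (A - B)
    linarith
  apply Real.sSup_le
  · rintro d ⟨z, hz, hnorm, rfl⟩
    have hexp : ‖reluVec y - z‖ ^ 2 = A - 2 * inner ℝ (reluVec y) z + ‖z‖ ^ 2 := by
      rw [@norm_sub_sq_real]
    have hin : (0 : ℝ) ≤ inner ℝ (reluVec y) z :=
      inner_nonneg_of_nonneg _ _ (reluVec_nonneg y) hz
    have : ‖reluVec y - z‖ ^ 2 ≤ 2 * A := by
      rw [hexp, hnorm, ← hA]; linarith
    linarith
  · have h1 : (0:ℝ) ≤ ‖reluVec y - reluVec (-y)‖ ^ 2 := sq_nonneg _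
    have h2 : (0:ℝ) ≤ |A - B| := abs_nonneg _
    linarith

/-- Appendix lemma behind Theorem 2: the expected squared distance between `σ(Y)` and `σ(−Y)`
dominates (up to `ε`) the expectation of the maximal squared distance from `σ(Y)` to
nonnegative vectors of equal norm. -/
theorem negation_dominates_max_distance
    {Ω : Type*} [MeasurableSpace Ω] (P : Measure Ω) [IsProbabilityMeasure P]
    {n : ℕ} (Y : Ω → EuclideanSpace ℝ (Fin n)) (hY : Measurable Y)
    (ε : ℝ) (hε : 0 ≤ ε)
    (hint1 : Integrable (fun ω => ‖reluVec (Y ω)‖ ^ 2) P)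
    (hint2 : Integrable (fun ω => ‖reluVec (-(Y ω))‖ ^ 2) P)
    (h1 : ∫ ω, |‖reluVec (Y ω)‖ ^ 2 - ‖reluVec (-(Y ω))‖ ^ 2| ∂P ≤ ε) :
    ∫ ω, ‖reluVec (Y ω) - reluVec (-(Y ω))‖ ^ 2 ∂P
      ≥ (∫ ω, sSup {d : ℝ | ∃ z : EuclideanSpace ℝ (Fin n),
            (∀ i, 0 ≤ z i) ∧ ‖z‖ = ‖reluVec (Y ω)‖ ∧ d = ‖reluVec (Y ω) - z‖ ^ 2} ∂P) - ε := by
  set S : Ω → ℝ := fun ω => sSup {d : ℝ | ∃ z : EuclideanSpace ℝ (Fin n),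
      (∀ i, 0 ≤ z i) ∧ ‖z‖ = ‖reluVec (Y ω)‖ ∧ d = ‖reluVec (Y ω) - z‖ ^ 2} with hS
  set f : Ω → ℝ := fun ω => ‖reluVec (Y ω) - reluVec (-(Y ω))‖ ^ 2 with hf
  set g : Ω → ℝ := fun ω => |‖reluVec (Y ω)‖ ^ 2 - ‖reluVec (-(Y ω))‖ ^ 2| with hg
  have hptwise : ∀ ω, S ω ≤ f ω + g ω := fun ω => pointwise_bound (Y ω)
  have hgint : Integrable g P := (hint1.sub hint2).abs
  have hfg : Integrable (fun ω => f ω + g ω) P := by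
    have hfint : Integrable f P := by
      have : f = fun ω => ‖reluVec (Y ω)‖ ^ 2 + ‖reluVec (-(Y ω))‖ ^ 2 := by
        funext ω
        simp only [hf]
        rw [@norm_sub_sq_real, relu_inner_zero]
        ring
      rw [this]
      exact hint1.add hint2
    exact hfint.add hgint
  have key : ∫ ω, S ω ∂P ≤ ∫ ω, f ω ∂P + ε := by
    by_cases hSint : Integrable S P
    · calc ∫ ω, S ω ∂P ≤ ∫ ω, (f ω + g ω) ∂P := integral_mono hSint hfg hptwise
        _ = ∫ ω, f ω ∂P + ∫ ω, g ω ∂P := by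
            rw [integral_add (hfg.sub hgint |>.congr (by
              filter_upwards with ω; simp)) hgint]
        _ ≤ ∫ ω, f ω ∂P + ε := by linarith [h1]
    · rw [integral_undef hSint]
      have : (0:ℝ) ≤ ∫ ω, f ω ∂P := integral_nonneg fun ω => sq_nonneg _
      linarith
  linarith [key]
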